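/- arXiv:2007.05844 — 2 statements merged into one kernel-verified Lean document; each statement's English description precedes it below -/
import Mathlib

section
/- Assuming the Continuum Hypothesis, there exists a Luzin mad family 𝒜 such that Ψ(𝒜) is quasi-normal. -/
open Set

namespace PsiSpace

/-- An (infinite) almost disjoint family of infinite subsets of ℕ. -/
def AlmostDisjoint (𝒜 : Set (Set ℕ)) : Prop :=
  𝒜.Infinite ∧ (∀ a ∈ 𝒜, a.Infinite) ∧
    ∀ a ∈ 𝒜, ∀ b ∈ 𝒜, a ≠ b → (a ∩ b).Finite

/-- A maximal almost disjoint family. -/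
def MadFamily (𝒜 : Set (Set ℕ)) : Prop :=
  AlmostDisjoint 𝒜 ∧ ∀ X : Set ℕ, X.Infinite → ∃ a ∈ 𝒜, (a ∩ X).Infinite

/-- 𝒜↾B = {a ∈ 𝒜 : a ∩ B infinite}. -/
def ADRestrict (𝒜 : Set (Set ℕ)) (B : Set ℕ) : Set (Set ℕ) :=
  {a | a ∈ 𝒜 ∧ (a ∩ B).Infinite}

/-- 𝒜 has true cardinality 𝔠. -/
def TrueCardContinuum (𝒜 : Set (Set ℕ)) : Prop :=
  ∀ B : Set ℕ, (ADRestrict 𝒜 B).Finite ∨ Cardinal.mk ↥(ADRestrict 𝒜 B) = Cardinal.continuum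

/-- The underlying set of the Mrówka–Isbell space Ψ(𝒜): ℕ together with the members of 𝒜. -/
def Psi (𝒜 : Set (Set ℕ)) : Type := ℕ ⊕ {a : Set ℕ // a ∈ 𝒜}

/-- The isolated point of Ψ(𝒜) corresponding to n ∈ ℕ. -/
def Psi.nat {𝒜 : Set (Set ℕ)} (n : ℕ) : Psi 𝒜 := Sum.inl n

/-- The point of Ψ(𝒜) corresponding to a ∈ 𝒜. -/
def Psi.pt {𝒜 : Set (Set ℕ)} (a : {a : Set ℕ // a ∈ 𝒜}) : Psi 𝒜 := Sum.inr a

/-- The Mrówka–Isbell topology: each n ∈ ℕ is isolated, and basic neighbourhoods of a ∈ 𝒜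
are {a} ∪ (a \ F) for F finite. Equivalently, U is open iff for every a ∈ 𝒜 with a ∈ U,
all but finitely many elements of a belong to U. -/
instance psiTop (𝒜 : Set (Set ℕ)) : TopologicalSpace (Psi 𝒜) where
  IsOpen U := ∀ a : {a : Set ℕ // a ∈ 𝒜}, Psi.pt a ∈ U →
    {n : ℕ | n ∈ a.1 ∧ Psi.nat n ∉ U}.Finite
  isOpen_univ := fun a _ => by
    convert Set.finite_empty using 1
    ext n
    simp [Set.mem_univ]
  isOpen_inter := fun U V hU hV a ha => by
    refine ((hU a ha.1).union (hV a ha.2)).subset ?_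
    rintro n ⟨hn, hnUV⟩
    by_cases h : Psi.nat n ∈ U
    · exact Or.inr ⟨hn, fun h' => hnUV ⟨h, h'⟩⟩
    · exact Or.inl ⟨hn, h⟩
  isOpen_sUnion := fun S hS a ha => by
    obtain ⟨U, hUS, haU⟩ := ha
    exact (hS U hUS a haU).subset fun n hn => ⟨hn.1, fun h => hn.2 ⟨U, hUS, h⟩⟩

/-- The copy of a set W ⊆ ℕ inside Ψ(𝒜). -/
def PsiNat (𝒜 : Set (Set ℕ)) (W : Set ℕ) : Set (Psi 𝒜) := {x | ∃ n ∈ W, x = Psi.nat n}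

/-- The copy of a subfamily 𝒞 ⊆ 𝒜 inside Ψ(𝒜). -/
def PsiSub (𝒜 𝒞 : Set (Set ℕ)) : Set (Psi 𝒜) :=
  {x | ∃ a : {a : Set ℕ // a ∈ 𝒜}, a.1 ∈ 𝒞 ∧ x = Psi.pt a}

/-- A and B are separated by disjoint open sets. -/
def SepOpen {X : Type*} [TopologicalSpace X] (A B : Set X) : Prop :=
  ∃ U V : Set X, IsOpen U ∧ IsOpen V ∧ A ⊆ U ∧ B ⊆ V ∧ Disjoint U V

/-- Regular closed (closed domain): A is the closure of its interior. -/
def RegClosed {X : Type*} [TopologicalSpace X] (A : Set X) : Prop :=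
  closure (interior A) = A

/-- π-closed: a finite intersection of regular closed sets. -/
def PiClosed {X : Type*} [TopologicalSpace X] (A : Set X) : Prop :=
  ∃ S : Finset (Set X), (∀ B ∈ S, RegClosed B) ∧ A = ⋂₀ ↑S

/-- A is an intersection of at most n regular closed sets. -/
def InterOfAtMost {X : Type*} [TopologicalSpace X] (n : ℕ) (A : Set X) : Prop :=
  ∃ S : Finset (Set X), S.card ≤ n ∧ (∀ B ∈ S, RegClosed B) ∧ A = ⋂₀ ↑S

/-- Almost-normal: disjoint closed + regular closed sets are separated. -/
def AlmostNormal (X : Type*) [TopologicalSpace X] : Prop :=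
  ∀ A B : Set X, IsClosed A → RegClosed B → Disjoint A B → SepOpen A B

/-- π-normal: disjoint closed + π-closed sets are separated. -/
def PiNormal (X : Type*) [TopologicalSpace X] : Prop :=
  ∀ A B : Set X, IsClosed A → PiClosed B → Disjoint A B → SepOpen A B

/-- Quasi-normal: disjoint π-closed sets are separated. -/
def QuasiNormal (X : Type*) [TopologicalSpace X] : Prop :=
  ∀ A B : Set X, PiClosed A → PiClosed B → Disjoint A B → SepOpen A B

/-- Mildly-normal: disjoint regular closed sets are separated. -/
def MildlyNormal (X : Type*) [TopologicalSpace X] : Prop :=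
  ∀ A B : Set X, RegClosed A → RegClosed B → Disjoint A B → SepOpen A B

/-- Partly-normal: disjoint regular closed + π-closed sets are separated. -/
def PartlyNormal (X : Type*) [TopologicalSpace X] : Prop :=
  ∀ A B : Set X, RegClosed A → PiClosed B → Disjoint A B → SepOpen A B

/-- n-partly-normal: disjoint regular closed + (intersection of at most n regular closed)
sets are separated. -/
def NPartlyNormal (n : ℕ) (X : Type*) [TopologicalSpace X] : Prop :=
  ∀ A B : Set X, RegClosed A → InterOfAtMost n B → Disjoint A B → SepOpen A B

/-- 𝓘⁺(𝒜): the sets B ⊆ ℕ with 𝒜↾B infinite. -/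
def IPlus (𝒜 : Set (Set ℕ)) : Set (Set ℕ) := {B | (ADRestrict 𝒜 B).Infinite}

/-- Completely separable almost disjoint family. -/
def CompletelySeparable (𝒜 : Set (Set ℕ)) : Prop :=
  ∀ B ∈ IPlus 𝒜, ∃ a ∈ 𝒜, a ⊆ B

/-- A Luzin family: it can be enumerated as ⟨a_α : α < ω₁⟩ so that for each α < ω₁ and
n ∈ ℕ, the set {β < α : a_α ∩ a_β ⊆ n} is finite. -/
def LuzinFamily (𝒜 : Set (Set ℕ)) : Prop :=
  ∃ a : Ordinal.{0} → Set ℕ,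
    (∀ α, α < (Cardinal.aleph 1).ord → a α ∈ 𝒜) ∧
    (∀ x ∈ 𝒜, ∃ α, α < (Cardinal.aleph 1).ord ∧ a α = x) ∧
    (∀ α, α < (Cardinal.aleph 1).ord → ∀ β, β < (Cardinal.aleph 1).ord → α ≠ β → a α ≠ a β) ∧
    ∀ α, α < (Cardinal.aleph 1).ord → ∀ n : ℕ,
      {β : Ordinal.{0} | β < α ∧ a α ∩ a β ⊆ Set.Iio n}.Finite

/-- Strongly ℵ₀-separated almost disjoint family. -/
def StronglyAleph0Separated (𝒜 : Set (Set ℕ)) : Prop :=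
  ∀ A B : Set (Set ℕ), A ⊆ 𝒜 → B ⊆ 𝒜 → A.Countable → A.Infinite →
    B.Countable → B.Infinite → Disjoint A B →
    ∃ X : Set ℕ,
      (∀ a ∈ 𝒜, (a \ X).Finite ∨ (a ∩ X).Finite) ∧
      (∀ a ∈ A, (a \ X).Finite) ∧
      (∀ a ∈ B, (a ∩ X).Finite)



/-- diagonal selector through a sequence of infinite sets -/
lemma exists_selector (S : ℕ → Set ℕ) (h : ∀ k, (S k).Infinite) :
    ∃ f : ℕ → ℕ, StrictMono f ∧ ∀ k, f k ∈ S k := by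
  choose g hg1 hg2 using fun (k : ℕ) (m : ℕ) => (h k).exists_gt m
  refine ⟨fun k => Nat.rec (g 0 0) (fun k fk => g (k+1) fk) k,
    strictMono_nat_of_lt_succ fun k => ?_, fun k => ?_⟩
  · exact hg2 (k+1) _
  · cases k with
    | zero => exact hg1 0 0
    | succ k => exact hg1 (k+1) _

noncomputable def Ebase (n : ℕ) : Set ℕ := Set.range (Nat.pair n)

lemma Ebase_infinite (n : ℕ) : (Ebase n).Infinite :=
  Set.infinite_range_of_injective fun a b h => (Nat.pair_eq_pair.mp h).2

lemma Ebase_disjoint {n m : ℕ} (h : n ≠ m) : Ebase n ∩ Ebase m = ∅ := by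
  ext x
  simp only [Ebase, Set.mem_inter_iff, Set.mem_range, Set.mem_empty_iff_false, iff_false]
  rintro ⟨⟨a, rfl⟩, ⟨b, hb⟩⟩
  exact h ((Nat.pair_eq_pair.mp hb.symm).1)

/-- prefix unions -/
def preU (b : ℕ → Set ℕ) (m : ℕ) : Set ℕ := ⋃ j ∈ Finset.range m, b j

/-- "V stays infinite after removing any prefix of prior sets" -/
def InCond (V : Set ℕ) (b : ℕ → Set ℕ) : Prop := ∀ m, (V \ preU b m).Infinite

open Classical in
noncomputable def Sseq (W : Ordinal.{0} → Set ℕ) (ξof : ℕ → Ordinal.{0}) (b : ℕ → Set ℕ)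
    (k : ℕ) : Set ℕ :=
  if k % 2 = 0 then b (k/2) \ preU b (k/2)
  else if InCond (W (ξof (Nat.unpair (k/2)).1)) b then
    W (ξof (Nat.unpair (k/2)).1) \ preU b k
  else b (k/2) \ preU b (k/2)

open Classical in
noncomputable def Sseq' (W : Ordinal.{0} → Set ℕ) (ξof : ℕ → Ordinal.{0}) (b : ℕ → Set ℕ)
    (k : ℕ) : Set ℕ :=
  if (Sseq W ξof b k).Infinite then Sseq W ξof b k else Set.Ici k

lemma Sseq'_infinite (W ξof b) (k : ℕ) : (Sseq' W ξof b k).Infinite := by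
  unfold Sseq'
  split
  · assumption
  · exact Set.Ici_infinite k

noncomputable def pickF (W : Ordinal.{0} → Set ℕ) (ξof : ℕ → Ordinal.{0}) (b : ℕ → Set ℕ) :
    ℕ → ℕ :=
  (exists_selector _ (Sseq'_infinite W ξof b)).choose

lemma pickF_strictMono (W ξof b) : StrictMono (pickF W ξof b) :=
  (exists_selector _ (Sseq'_infinite W ξof b)).choose_spec.1

lemma pickF_mem (W ξof b) (k : ℕ) : pickF W ξof b k ∈ Sseq' W ξof b k :=
  (exists_selector _ (Sseq'_infinite W ξof b)).choose_spec.2 k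

noncomputable def mainA (W : Ordinal.{0} → Set ℕ) (ξof : ℕ → Ordinal.{0}) (b : ℕ → Set ℕ) :
    Set ℕ := Set.range (pickF W ξof b)

section MainLemmas
variable (W : Ordinal.{0} → Set ℕ) (ξof : ℕ → Ordinal.{0}) (b : ℕ → Set ℕ)
variable (hb1 : ∀ k, (b k).Infinite) (hb2 : ∀ j k, j ≠ k → (b k ∩ b j).Finite)

include hb1 hb2 in
lemma bdiff_infinite (k : ℕ) : (b k \ preU b k).Infinite := by
  have h1 : (b k \ ⋃ j ∈ Finset.range k, (b k ∩ b j)).Infinite := by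
    refine (hb1 k).diff (Set.Finite.biUnion (Finset.range k).finite_toSet ?_)
    intro j hj
    exact hb2 j k (by simpa using (Finset.mem_range.mp hj).ne)
  refine Set.Infinite.mono ?_ h1
  intro x hx
  refine ⟨hx.1, fun hc => hx.2 ?_⟩
  rw [preU] at hc
  rcases Set.mem_iUnion₂.mp hc with ⟨j, hj, hxj⟩
  exact Set.mem_iUnion₂.mpr ⟨j, hj, ⟨hx.1, hxj⟩⟩

include hb1 hb2 in
lemma Sseq_infinite (k : ℕ) : (Sseq W ξof b k).Infinite := by
  unfold Sseq
  split
  · exact bdiff_infinite b hb1 hb2 _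
  · split
    · next h => exact h k
    · exact bdiff_infinite b hb1 hb2 _

include hb1 hb2 in
lemma pickF_mem' (k : ℕ) : pickF W ξof b k ∈ Sseq W ξof b k := by
  have := pickF_mem W ξof b k
  rwa [Sseq', if_pos (Sseq_infinite W ξof b hb1 hb2 k)] at this

lemma mainA_infinite : (mainA W ξof b).Infinite :=
  Set.infinite_range_of_injective (pickF_strictMono W ξof b).injective

include hb1 hb2 in
lemma Sseq_subset_compl {k k₀ : ℕ} (hk : 2*k₀ + 2 ≤ k) : Sseq W ξof b k ∩ b k₀ = ∅ := by
  have hmem : ∀ m, k₀ < m → ∀ x ∈ b k₀, x ∈ preU b m := by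
    intro m hm x hx
    simp only [preU, Set.mem_iUnion]
    exact ⟨k₀, by simpa using hm, hx⟩
  ext x
  simp only [Set.mem_inter_iff, Set.mem_empty_iff_false, iff_false, not_and]
  intro hxS hxb
  unfold Sseq at hxS
  split at hxS
  · next he =>
    exact hxS.2 (hmem _ (by omega) x hxb)
  · split at hxS
    · exact hxS.2 (hmem _ (by omega) x hxb)
    · exact hxS.2 (hmem _ (by omega) x hxb)

include hb1 hb2 in
lemma mainA_inter_finite (k₀ : ℕ) : (mainA W ξof b ∩ b k₀).Finite := by
  have hsub : mainA W ξof b ∩ b k₀ ⊆ (pickF W ξof b) '' (Set.Iio (2*k₀+2)) := by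
    rintro x ⟨⟨k, rfl⟩, hxb⟩
    by_cases hk : 2*k₀+2 ≤ k
    · exfalso
      have := Sseq_subset_compl W ξof b hb1 hb2 (k₀ := k₀) hk
      have hmem := pickF_mem' W ξof b hb1 hb2 k
      exact absurd (Set.mem_inter hmem hxb) (by rw [this]; exact Set.notMem_empty _)
    · exact ⟨k, Set.mem_Iio.mpr (by omega), rfl⟩
  exact ((Set.finite_Iio _).image _).subset hsub

include hb1 hb2 in
lemma mainA_luzin_aux (k₀ n : ℕ) (h : mainA W ξof b ∩ b k₀ ⊆ Set.Iio n) : 2*k₀ < n := by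
  have hmem := pickF_mem' W ξof b hb1 hb2 (2*k₀)
  rw [Sseq, if_pos (by omega)] at hmem
  have h2 : (2*k₀)/2 = k₀ := by omega
  rw [h2] at hmem
  have hx : pickF W ξof b (2*k₀) ∈ mainA W ξof b ∩ b k₀ :=
    ⟨Set.mem_range_self _, hmem.1⟩
  have := h hx
  have hge : 2*k₀ ≤ pickF W ξof b (2*k₀) := (pickF_strictMono W ξof b).le_apply
  simp only [Set.mem_Iio] at this
  omega

include hb1 hb2 in
lemma mainA_hits (i : ℕ) (h : InCond (W (ξof i)) b) :
    (mainA W ξof b ∩ W (ξof i)).Infinite := by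
  have hstep : ∀ m : ℕ, pickF W ξof b (2 * Nat.pair i m + 1) ∈ W (ξof i) := by
    intro m
    have hmem := pickF_mem' W ξof b hb1 hb2 (2 * Nat.pair i m + 1)
    rw [Sseq, if_neg (by omega)] at hmem
    have h2 : (2 * Nat.pair i m + 1)/2 = Nat.pair i m := by omega
    rw [h2, Nat.unpair_pair] at hmem
    simp only at hmem
    rw [if_pos h] at hmem
    exact hmem.1
  have hinj : Function.Injective (fun m => pickF W ξof b (2 * Nat.pair i m + 1)) := by
    intro m m' hmm
    have h1 := (pickF_strictMono W ξof b).injective hmm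
    have h2 : Nat.pair i m = Nat.pair i m' := by omega
    exact (Nat.pair_eq_pair.mp h2).2
  exact Set.infinite_of_injective_forall_mem hinj
    (fun m => ⟨Set.mem_range_self _, hstep m⟩)

end MainLemmas



open Classical in
noncomputable def stageF (W : Ordinal.{0} → Set ℕ) (α : Ordinal.{0})
    (ih : ∀ β, β < α → Set ℕ) : Set ℕ :=
  if hfin : α < Ordinal.omega0 then Ebase (Ordinal.lt_omega0.mp hfin).choose
  else if hc : Nonempty (ℕ ≃ {β : Ordinal.{0} // β < α}) then
    mainA W (fun i => ((Classical.choice hc) i).1)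
      (fun k => ih ((Classical.choice hc) k).1 ((Classical.choice hc) k).2)
  else ∅

noncomputable def bld (W : Ordinal.{0} → Set ℕ) : Ordinal.{0} → Set ℕ :=
  Ordinal.lt_wf.fix (stageF W)

lemma bld_eq (W : Ordinal.{0} → Set ℕ) (α : Ordinal.{0}) :
    bld W α = stageF W α (fun β _ => bld W β) :=
  Ordinal.lt_wf.fix_eq (stageF W) α

noncomputable def Om : Ordinal.{0} := (Cardinal.aleph 1).ord

lemma omega0_lt_Om : Ordinal.omega0 < Om := by
  rw [Om, ← Cardinal.ord_aleph0]
  exact Cardinal.ord_lt_ord.mpr Cardinal.aleph0_lt_aleph_one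

lemma card_eq_aleph0 {α : Ordinal.{0}} (h1 : Ordinal.omega0 ≤ α) (h2 : α < Om) :
    α.card = Cardinal.aleph0 := by
  refine le_antisymm ?_ ?_
  · have := Cardinal.lt_ord.mp h2
    rwa [← Cardinal.succ_aleph0, Order.lt_succ_iff] at this
  · have := Ordinal.card_le_card h1
    rwa [Ordinal.card_omega0] at this

lemma countable_equiv {α : Ordinal.{0}} (h1 : Ordinal.omega0 ≤ α) (h2 : α < Om) :
    Nonempty (ℕ ≃ {β : Ordinal.{0} // β < α}) := by
  have e1 : {β : Ordinal.{0} // β < α} ≃ ↥(Set.Iio α) :=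
    Equiv.subtypeEquivRight (fun β => (Set.mem_Iio).symm)
  have hmk : Cardinal.lift.{1,0} (Cardinal.mk ℕ) = Cardinal.lift.{0,1} (Cardinal.mk ↥(Set.Iio α)) := by
    rw [Cardinal.mk_nat, Ordinal.mk_Iio_ordinal, Cardinal.lift_lift, card_eq_aleph0 h1 h2]
  obtain ⟨e2⟩ := Cardinal.lift_mk_eq'.mp hmk
  exact ⟨e2.trans e1.symm⟩

structure GoodAt (W : Ordinal.{0} → Set ℕ) (A : Ordinal.{0} → Set ℕ) (α : Ordinal.{0}) : Prop where
  inf : (A α).Infinite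
  ad : ∀ β < α, (A α ∩ A β).Finite
  luzin : ∀ n : ℕ, {β : Ordinal.{0} | β < α ∧ A α ∩ A β ⊆ Set.Iio n}.Finite
  hit : Ordinal.omega0 ≤ α → ∀ ξ < α,
    (∀ s : Finset Ordinal.{0}, (∀ β ∈ s, β < α) → (W ξ \ ⋃ β ∈ s, A β).Infinite) →
    (A α ∩ W ξ).Infinite

theorem bld_good (W : Ordinal.{0} → Set ℕ) : ∀ α, α < Om → GoodAt W (bld W) α := by
  intro α
  induction α using Ordinal.induction with
  | _ α IH =>
  intro hαOm
  by_cases hfin : α < Ordinal.omega0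
  · -- base case
    have hAα : bld W α = Ebase (Ordinal.lt_omega0.mp hfin).choose := by
      rw [bld_eq, stageF, dif_pos hfin]
    have hspecα := (Ordinal.lt_omega0.mp hfin).choose_spec
    have base_eq : ∀ β (hβ : β < α), ∃ m : ℕ, bld W β = Ebase m ∧ (m : Ordinal.{0}) ≠ α := by
      intro β hβ
      have hβfin : β < Ordinal.omega0 := hβ.trans hfin
      refine ⟨(Ordinal.lt_omega0.mp hβfin).choose, ?_, ?_⟩
      · rw [bld_eq, stageF, dif_pos hβfin]
      · rw [← (Ordinal.lt_omega0.mp hβfin).choose_spec]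
        exact (ne_of_lt hβ)
    have had : ∀ β < α, (bld W α ∩ bld W β).Finite := by
      intro β hβ
      obtain ⟨m, hm, hmne⟩ := base_eq β hβ
      rw [hAα, hm, Ebase_disjoint]
      · exact Set.finite_empty
      · intro hnm
        apply hmne
        rw [← hnm, ← hspecα]
    refine ⟨?_, had, ?_, ?_⟩
    · rw [hAα]; exact Ebase_infinite _
    · intro n
      have hsub : {β : Ordinal.{0} | β < α ∧ bld W α ∩ bld W β ⊆ Set.Iio n} ⊆
          (fun m : ℕ => (m : Ordinal.{0})) '' (Set.Iio (Ordinal.lt_omega0.mp hfin).choose) := by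
        rintro β ⟨hβα, -⟩
        have hβfin : β < Ordinal.omega0 := hβα.trans hfin
        obtain ⟨m, hm⟩ := Ordinal.lt_omega0.mp hβfin
        refine ⟨m, ?_, hm.symm⟩
        have : (m : Ordinal.{0}) < ((Ordinal.lt_omega0.mp hfin).choose : ℕ) := by
          rw [← hm, ← hspecα]; exact hβα
        exact_mod_cast this
      exact ((Set.finite_Iio _).image _).subset hsub
    · intro hωα
      exact absurd (hωα.trans_lt hfin) (lt_irrefl _)
  · -- main case
    push_neg at hfin
    have hc : Nonempty (ℕ ≃ {β : Ordinal.{0} // β < α}) := countable_equiv hfin hαOm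
    set ε : ℕ ≃ {β : Ordinal.{0} // β < α} := Classical.choice hc with hε
    set ξof : ℕ → Ordinal.{0} := fun i => ((ε i) : {β : Ordinal.{0} // β < α}).1 with hξof
    set b : ℕ → Set ℕ := fun k => bld W (ε k).1 with hb
    have hAα : bld W α = mainA W ξof b := by
      rw [bld_eq, stageF, dif_neg (not_lt.mpr hfin), dif_pos hc]
    have hb1 : ∀ k, (b k).Infinite := fun k =>
      (IH (ε k).1 (ε k).2 ((ε k).2.trans hαOm)).inf
    have hb2 : ∀ j k, j ≠ k → (b k ∩ b j).Finite := by
      intro j k hjk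
      have hne : ((ε j).1 : Ordinal.{0}) ≠ (ε k).1 := by
        intro h
        exact hjk (ε.injective (Subtype.ext h))
      rcases hne.lt_or_gt with h | h
      · exact (IH (ε k).1 (ε k).2 ((ε k).2.trans hαOm)).ad _ h
      · rw [Set.inter_comm]
        exact (IH (ε j).1 (ε j).2 ((ε j).2.trans hαOm)).ad _ h
    refine ⟨?_, ?_, ?_, ?_⟩
    · rw [hAα]; exact mainA_infinite W ξof b
    · intro β hβ
      have hkey : b (ε.symm ⟨β, hβ⟩) = bld W β := by
        rw [hb]
        simp only [Equiv.apply_symm_apply]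
    

      rw [hAα, ← hkey]
      exact mainA_inter_finite W ξof b hb1 hb2 _
    · intro n
      have hsub : {β : Ordinal.{0} | β < α ∧ bld W α ∩ bld W β ⊆ Set.Iio n} ⊆
          (fun k : ℕ => (ε k).1) '' (Set.Iio n) := by
        rintro β ⟨hβα, hβsub⟩
        set k₀ := ε.symm ⟨β, hβα⟩ with hk₀
        have hkey : b k₀ = bld W β := by
          rw [hb, hk₀]; simp only [Equiv.apply_symm_apply]
        have h2 : 2 * k₀ < n := by
          apply mainA_luzin_aux W ξof b hb1 hb2
          rw [hkey, ← hAα]; exact hβsub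
        refine ⟨k₀, Set.mem_Iio.mpr (by omega), ?_⟩
        rw [hk₀]; simp only [Equiv.apply_symm_apply]
      exact ((Set.finite_Iio _).image _).subset hsub
    · intro hωα ξ hξα hs
      set i := ε.symm ⟨ξ, hξα⟩ with hi
      have hkey : ξof i = ξ := by
        rw [hξof, hi]; simp only [Equiv.apply_symm_apply]
      have hIn : InCond (W (ξof i)) b := by
        rw [hkey]
        intro m
        have hUeq : (⋃ β ∈ (Finset.range m).image (fun j => ((ε j).1 : Ordinal.{0})), bld W β)
            = preU b m := by
          ext x
          simp only [preU, Set.mem_iUnion, Finset.mem_image, Finset.mem_range, exists_prop]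
          constructor
          · rintro ⟨β, ⟨j, hj, rfl⟩, hx⟩
            exact ⟨j, hj, hx⟩
          · rintro ⟨j, hj, hx⟩
            exact ⟨(ε j).1, ⟨j, hj, rfl⟩, hx⟩
        have := hs ((Finset.range m).image (fun j => ((ε j).1 : Ordinal.{0})))
          (by
            intro β hβ
            simp only [Finset.mem_image, Finset.mem_range] at hβ
            obtain ⟨j, hj, rfl⟩ := hβ
            exact (ε j).2)
        rwa [hUeq] at this
      have := mainA_hits W ξof b hb1 hb2 i hIn
      rwa [hkey, ← hAα] at this


section Topology

variable {𝒜 : Set (Set ℕ)}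

lemma psi_isOpen_iff {U : Set (Psi 𝒜)} : IsOpen U ↔
    ∀ a : {a : Set ℕ // a ∈ 𝒜}, Psi.pt a ∈ U → {n : ℕ | n ∈ a.1 ∧ Psi.nat n ∉ U}.Finite :=
  Iff.rfl

lemma pt_ne_nat (a : {a : Set ℕ // a ∈ 𝒜}) (n : ℕ) : (Psi.pt a : Psi 𝒜) ≠ Psi.nat n := by
  intro h
  exact Sum.inr_ne_inl h

lemma pt_inj {a b : {a : Set ℕ // a ∈ 𝒜}} (h : (Psi.pt a : Psi 𝒜) = Psi.pt b) : a = b := by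
  exact Sum.inr.inj h

lemma nat_inj {n m : ℕ} (h : (Psi.nat n : Psi 𝒜) = Psi.nat m) : n = m := by
  exact Sum.inl.inj h

lemma isOpen_singleton_nat (n : ℕ) : IsOpen ({Psi.nat n} : Set (Psi 𝒜)) := by
  intro a ha
  exact absurd ha (by simp [Psi.pt, Psi.nat]; exact pt_ne_nat a n)

/-- basic neighbourhoods of a point of 𝒜 -/
lemma isOpen_basic (a : {a : Set ℕ // a ∈ 𝒜}) (F : Set ℕ) (hF : F.Finite) :
    IsOpen (({Psi.pt a} ∪ {x | ∃ n ∈ a.1 \ F, x = Psi.nat n}) : Set (Psi 𝒜)) := by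
  intro a' ha'
  have haa : a' = a := by
    rcases ha' with h | h
    · exact pt_inj h
    · obtain ⟨n, _, hn⟩ := h
      exact absurd hn (pt_ne_nat a' n)
  subst haa
  refine hF.subset ?_
  rintro n ⟨hn1, hn2⟩
  by_contra hnF
  exact hn2 (Or.inr ⟨n, ⟨hn1, hnF⟩, rfl⟩)

/-- trace of a set on ℕ -/
def trc (C : Set (Psi 𝒜)) : Set ℕ := {n : ℕ | (Psi.nat n : Psi 𝒜) ∈ C}

lemma nat_mem_closure {U : Set (Psi 𝒜)} {n : ℕ} (h : (Psi.nat n : Psi 𝒜) ∈ closure U) :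
    (Psi.nat n : Psi 𝒜) ∈ U := by
  rcases mem_closure_iff.mp h {Psi.nat n} (isOpen_singleton_nat n) rfl with ⟨x, hx1, hx2⟩
  rcases hx1 with rfl
  exact hx2

lemma pt_mem_closure_iff {U : Set (Psi 𝒜)} {a : {a : Set ℕ // a ∈ 𝒜}} :
    (Psi.pt a : Psi 𝒜) ∈ closure U ↔
      Psi.pt a ∈ U ∨ (a.1 ∩ trc U).Infinite := by
  constructor
  · intro h
    by_contra hcon
    push_neg at hcon
    obtain ⟨hU, hfin⟩ := hcon
    rcases mem_closure_iff.mp h _ (isOpen_basic a _ hfin) (Or.inl rfl) with ⟨x, hx1, hx2⟩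
    rcases hx1 with h | h
    · rcases h with rfl
      exact hU hx2
    · obtain ⟨m, hm, rfl⟩ := h
      exact hm.2 ⟨hm.1, hx2⟩
  · intro h
    rcases h with h | h
    · exact subset_closure h
    · rw [mem_closure_iff]
      intro V hV hptV
      have hfin := hV a hptV
      obtain ⟨m, hm1, hm2⟩ := (h.diff hfin).nonempty
      simp only [Set.mem_inter_iff, Set.mem_setOf_eq] at hm1
      refine ⟨Psi.nat m, ?_, hm1.2⟩
      by_contra hmV
      exact hm2 ⟨hm1.1, hmV⟩

lemma regClosed_pt_iff (h𝒜 : ∀ x ∈ 𝒜, x.Infinite) {C : Set (Psi 𝒜)} (hC : RegClosed C)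
    (a : {a : Set ℕ // a ∈ 𝒜}) :
    (Psi.pt a : Psi 𝒜) ∈ C ↔ (a.1 ∩ trc C).Infinite := by
  have htr : trc (interior C) = trc C := by
    apply Set.Subset.antisymm
    · intro n hn
      exact (interior_subset hn : (Psi.nat n : Psi 𝒜) ∈ C)
    · intro n hn
      have : ({Psi.nat n} : Set (Psi 𝒜)) ⊆ C := by
        intro x hx; rcases hx with rfl; exact hn
      exact interior_maximal this (isOpen_singleton_nat n) rfl
  constructor
  · intro h
    have hCeq : closure (interior C) = C := hC
    have h2 : (Psi.pt a : Psi 𝒜) ∈ closure (interior C) := by rw [hCeq]; exact h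
    rcases pt_mem_closure_iff.mp h2 with h3 | h3
    · -- a ∈ interior C : then a.1 \ trc(interior C) finite, so a.1 ∩ trc C infinite
      have hfin := isOpen_interior (X := Psi 𝒜) a h3
      have : a.1 ∩ trc (interior C) = a.1 \ {n : ℕ | n ∈ a.1 ∧ Psi.nat n ∉ interior C} := by
        ext m
        simp only [Set.mem_inter_iff, Set.mem_diff, Set.mem_setOf_eq, trc]
        tauto
      rw [← htr, this]
      exact (h𝒜 a.1 a.2).diff hfin
    · rwa [htr] at h3
  · intro h
    have hCeq : closure (interior C) = C := hC
    rw [← hCeq]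
    rw [pt_mem_closure_iff]
    right
    rwa [htr]

lemma regClosed_def {C : Set (Psi 𝒜)} (hC : RegClosed C) : closure (interior C) = C := hC

end Topology

section Separation

variable {𝒜 : Set (Set ℕ)}

lemma nat_mem_psiNat {Y : Set ℕ} {n : ℕ} : (Psi.nat n : Psi 𝒜) ∈ PsiNat 𝒜 Y ↔ n ∈ Y := by
  constructor
  · rintro ⟨m, hm, h⟩
    rwa [nat_inj h]
  · intro h
    exact ⟨n, h, rfl⟩

lemma pt_not_mem_psiNat {Y : Set ℕ} {a : {a : Set ℕ // a ∈ 𝒜}} :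
    (Psi.pt a : Psi 𝒜) ∉ PsiNat 𝒜 Y := by
  rintro ⟨m, _, h⟩
  exact pt_ne_nat a m h

lemma pt_mem_psiSub {𝒞 : Set (Set ℕ)} {a : {a : Set ℕ // a ∈ 𝒜}} :
    (Psi.pt a : Psi 𝒜) ∈ PsiSub 𝒜 𝒞 ↔ a.1 ∈ 𝒞 := by
  constructor
  · rintro ⟨a', ha', h⟩
    rwa [pt_inj h]
  · intro h
    exact ⟨a, h, rfl⟩

lemma nat_not_mem_psiSub {𝒞 : Set (Set ℕ)} {n : ℕ} :
    (Psi.nat n : Psi 𝒜) ∉ PsiSub 𝒜 𝒞 := by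
  rintro ⟨a', _, h⟩
  exact pt_ne_nat a' n h.symm

lemma sepOpen_symm {X : Type*} [TopologicalSpace X] {A B : Set X} (h : SepOpen A B) :
    SepOpen B A := by
  obtain ⟨U, V, hU, hV, hAU, hBV, hUV⟩ := h
  exact ⟨V, U, hV, hU, hBV, hAU, hUV.symm⟩

/-- The main separation construction, when the 𝒜-part of B is finite. -/
lemma sep_of_finite (h𝒜inf : ∀ x ∈ 𝒜, x.Infinite)
    (h𝒜ad : ∀ x ∈ 𝒜, ∀ y ∈ 𝒜, x ≠ y → (x ∩ y).Finite)
    (S T : Finset (Set (Psi 𝒜))) (hSreg : ∀ C ∈ S, RegClosed C) (hTreg : ∀ D ∈ T, RegClosed D)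
    (hdisj : Disjoint (⋂₀ (↑S : Set (Set (Psi 𝒜)))) (⋂₀ (↑T : Set (Set (Psi 𝒜)))))
    (hCB : ({x | x ∈ 𝒜 ∧ ∀ D ∈ T, (x ∩ trc D).Infinite}).Finite) :
    SepOpen (⋂₀ (↑S : Set (Set (Psi 𝒜)))) (⋂₀ (↑T : Set (Set (Psi 𝒜)))) := by
  classical
  set CA : Set (Set ℕ) := {x | x ∈ 𝒜 ∧ ∀ C ∈ S, (x ∩ trc C).Infinite} with hCAdef
  set CB : Set (Set ℕ) := {x | x ∈ 𝒜 ∧ ∀ D ∈ T, (x ∩ trc D).Infinite} with hCBdef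
  set VA : Set ℕ := trc (⋂₀ (↑S : Set (Set (Psi 𝒜)))) with hVAdef
  set VB : Set ℕ := trc (⋂₀ (↑T : Set (Set (Psi 𝒜)))) with hVBdef
  -- membership characterizations
  have fA : ∀ a : {a : Set ℕ // a ∈ 𝒜}, (Psi.pt a ∈ ⋂₀ (↑S : Set (Set (Psi 𝒜))) ↔ a.1 ∈ CA) := by
    intro a
    rw [Set.mem_sInter]
    constructor
    · intro h
      exact ⟨a.2, fun C hC => (regClosed_pt_iff h𝒜inf (hSreg C hC) a).mp (h C (by exact_mod_cast hC))⟩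
    · rintro ⟨-, h⟩ C hC
      rw [Finset.mem_coe] at hC
      exact (regClosed_pt_iff h𝒜inf (hSreg C hC) a).mpr (h C hC)
  have fB : ∀ a : {a : Set ℕ // a ∈ 𝒜}, (Psi.pt a ∈ ⋂₀ (↑T : Set (Set (Psi 𝒜))) ↔ a.1 ∈ CB) := by
    intro a
    rw [Set.mem_sInter]
    constructor
    · intro h
      exact ⟨a.2, fun D hD => (regClosed_pt_iff h𝒜inf (hTreg D hD) a).mp (h D (by exact_mod_cast hD))⟩
    · rintro ⟨-, h⟩ D hD
      rw [Finset.mem_coe] at hD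
      exact (regClosed_pt_iff h𝒜inf (hTreg D hD) a).mpr (h D hD)
  have D2 : ∀ x, x ∈ CA → x ∈ CB → False := by
    intro x hxA hxB
    have h1 := (fA ⟨x, hxA.1⟩).mpr hxA
    have h2 := (fB ⟨x, hxA.1⟩).mpr hxB
    exact Set.disjoint_left.mp hdisj h1 h2
  have hVBsub : ∀ D ∈ T, VB ⊆ trc D := by
    intro D hD n hn
    exact hn D (by exact_mod_cast hD)
  have hVAsub : ∀ C ∈ S, VA ⊆ trc C := by
    intro C hC n hn
    exact hn C (by exact_mod_cast hC)
  have D3 : ∀ x ∈ CA, (x ∩ VB).Finite := by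
    intro x hx
    by_contra hinf
    rw [← Set.not_infinite, not_not] at hinf
    have : x ∈ CB := ⟨hx.1, fun D hD => hinf.mono (Set.inter_subset_inter_right x (hVBsub D hD))⟩
    exact D2 x hx this
  have D4 : ∀ x ∈ CB, (x ∩ VA).Finite := by
    intro x hx
    by_contra hinf
    rw [← Set.not_infinite, not_not] at hinf
    have : x ∈ CA := ⟨hx.1, fun C hC => hinf.mono (Set.inter_subset_inter_right x (hVAsub C hC))⟩
    exact D2 x this hx
  have DVAVB : ∀ n, n ∈ VA → n ∈ VB → False := by
    intro n h1 h2
    exact Set.disjoint_left.mp hdisj h1 h2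
  -- the separating set of naturals
  set X : Set ℕ := {n | n ∉ VB ∧ ∀ b ∈ CB, n ∈ b → n ∈ VA} with hXdef
  have hVAX : VA ⊆ X := by
    intro n hn
    exact ⟨fun h => DVAVB n hn h, fun b _ _ => hn⟩
  -- the open sets
  refine ⟨PsiNat 𝒜 X ∪ PsiSub 𝒜 CA, PsiNat 𝒜 Xᶜ ∪ PsiSub 𝒜 CB, ?_, ?_, ?_, ?_, ?_⟩
  · -- U open
    intro a ha
    have haCA : a.1 ∈ CA := by
      rcases ha with h | h
      · exact absurd h pt_not_mem_psiNat
      · exact pt_mem_psiSub.mp h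
    have hsub : {n : ℕ | n ∈ a.1 ∧ Psi.nat n ∉ PsiNat 𝒜 X ∪ PsiSub 𝒜 CA} ⊆
        (a.1 ∩ VB) ∪ ⋃ b ∈ CB, (a.1 ∩ b) := by
      rintro n ⟨hna, hnU⟩
      have hnX : n ∉ X := fun h => hnU (Or.inl (nat_mem_psiNat.mpr h))
      rw [hXdef] at hnX
      simp only [Set.mem_setOf_eq, not_and, not_forall] at hnX
      by_cases hnVB : n ∈ VB
      · exact Or.inl ⟨hna, hnVB⟩
      · obtain ⟨b, hb, hnb, -⟩ := hnX hnVB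
        exact Or.inr (Set.mem_biUnion hb ⟨hna, hnb⟩)
    refine Set.Finite.subset ?_ hsub
    refine (D3 a.1 haCA).union (Set.Finite.biUnion hCB ?_)
    intro b hb
    refine (h𝒜ad a.1 a.2 b hb.1 ?_).subset (Set.inter_subset_inter_left b (fun x h => h))
    intro hab
    exact D2 a.1 haCA (hab ▸ hb)
  · -- V open
    intro a ha
    have haCB : a.1 ∈ CB := by
      rcases ha with h | h
      · exact absurd h pt_not_mem_psiNat
      · exact pt_mem_psiSub.mp h
    have hsub : {n : ℕ | n ∈ a.1 ∧ Psi.nat n ∉ PsiNat 𝒜 Xᶜ ∪ PsiSub 𝒜 CB} ⊆ a.1 ∩ VA := by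
      rintro n ⟨hna, hnV⟩
      have hnX : n ∈ X := by
        by_contra h
        exact hnV (Or.inl (nat_mem_psiNat.mpr h))
      exact ⟨hna, hnX.2 a.1 haCB hna⟩
    exact Set.Finite.subset (D4 a.1 haCB) hsub
  · -- A ⊆ U
    intro x hx
    rcases x with n | a
    · left
      have : n ∈ VA := hx
      exact nat_mem_psiNat.mpr (hVAX this)
    · right
      exact pt_mem_psiSub.mpr ((fA a).mp hx)
  · -- B ⊆ V
    intro x hx
    rcases x with n | a
    · left
      refine nat_mem_psiNat.mpr ?_
      intro hX
      exact hX.1 hx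
    · right
      exact pt_mem_psiSub.mpr ((fB a).mp hx)
  · -- disjoint
    rw [Set.disjoint_left]
    rintro x (hx | hx) (hy | hy)
    · obtain ⟨n, hn, rfl⟩ := hx
      rw [nat_mem_psiNat] at hy
      exact hy hn
    · obtain ⟨n, hn, rfl⟩ := hx
      exact nat_not_mem_psiSub hy
    · obtain ⟨a, ha, rfl⟩ := hx
      exact pt_not_mem_psiNat hy
    · obtain ⟨a, ha, rfl⟩ := hx
      rw [pt_mem_psiSub] at hy
      exact D2 a.1 ha hy

end Separation

lemma tail_combine {ι : Type*} (A : Ordinal.{0} → Set ℕ) (t : Finset ι) (g : ι → Set ℕ)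
    (h : ∀ i ∈ t, ∃ γ, γ < Om ∧ ∀ α, γ ≤ α → α < Om → (A α ∩ g i).Infinite) :
    ∃ γ, γ < Om ∧ ∀ α, γ ≤ α → α < Om → ∀ i ∈ t, (A α ∩ g i).Infinite := by
  classical
  induction t using Finset.induction_on with
  | empty => exact ⟨Ordinal.omega0, omega0_lt_Om, fun α _ _ i hi => absurd hi (by simp)⟩
  | @insert i t hit ih =>
    obtain ⟨γ₁, hγ₁, h1⟩ := h i (Finset.mem_insert_self i t)
    obtain ⟨γ₂, hγ₂, h2⟩ := ih (fun j hj => h j (Finset.mem_insert_of_mem hj))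
    refine ⟨max γ₁ γ₂, max_lt hγ₁ hγ₂, fun α hα hαOm j hj => ?_⟩
    rcases Finset.mem_insert.mp hj with rfl | hj
    · exact h1 α (le_trans (le_max_left _ _) hα) hαOm
    · exact h2 α (le_trans (le_max_right _ _) hα) hαOm j hj

lemma succ_lt_Om {ξ : Ordinal.{0}} (h : ξ < Om) : ξ + 1 < Om := by
  rw [Ordinal.add_one_eq_succ]
  exact (Cardinal.isSuccLimit_ord (le_of_lt Cardinal.aleph0_lt_aleph_one)).succ_lt h

/-- under CH there is a Luzin mad family 𝒜 with Ψ(𝒜) quasi-normal. -/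
theorem CH_luzin_mad_quasiNormal (hCH : Cardinal.continuum = Cardinal.aleph 1) :
    ∃ 𝒜, MadFamily 𝒜 ∧ LuzinFamily 𝒜 ∧ QuasiNormal (Psi 𝒜) := by
  classical
  -- transfer CH to universe 0
  have hCH0 : Cardinal.continuum.{0} = Cardinal.aleph.{0} 1 := by
    have h1 : Cardinal.lift.{_,0} Cardinal.continuum.{0} = Cardinal.lift.{_,0} (Cardinal.aleph.{0} 1) := by
      rw [Cardinal.lift_continuum, Cardinal.lift_aleph]
      simpa using hCH
    exact Cardinal.lift_injective h1
  -- an enumeration of the subsets of ℕ in order type ω₁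
  have hsetcard : Cardinal.mk (Set ℕ) = Cardinal.aleph 1 := by
    rw [Cardinal.mk_set, Cardinal.mk_nat, Cardinal.two_power_aleph0]
    exact hCH0
  have hmk : Cardinal.lift.{1,0} (Cardinal.mk (Set ℕ))
      = Cardinal.lift.{0,1} (Cardinal.mk ↥(Set.Iio Om)) := by
    rw [hsetcard, Ordinal.mk_Iio_ordinal, Cardinal.lift_lift, Om, Cardinal.card_ord]
  obtain ⟨e⟩ := Cardinal.lift_mk_eq'.mp hmk
  set W : Ordinal.{0} → Set ℕ := fun ξ => if h : ξ < Om then e.symm ⟨ξ, h⟩ else ∅ with hWdef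
  have hWsurj : ∀ V : Set ℕ, ∃ ξ, ξ < Om ∧ W ξ = V := by
    intro V
    refine ⟨(e V).1, (e V).2, ?_⟩
    rw [hWdef]
    dsimp only
    rw [dif_pos (Set.mem_Iio.mp (e V).2)]
    exact e.symm_apply_apply V
  set A : Ordinal.{0} → Set ℕ := bld W with hAdef
  have good : ∀ α, α < Om → GoodAt W A α := bld_good W
  set 𝒜 : Set (Set ℕ) := {x | ∃ α, α < Om ∧ A α = x} with h𝒜def
  have hmemA : ∀ α, α < Om → A α ∈ 𝒜 := fun α h => ⟨α, h, rfl⟩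
  -- injectivity
  have hinj : ∀ α, α < Om → ∀ β, β < Om → α ≠ β → A α ≠ A β := by
    have key : ∀ α, α < Om → ∀ β, β < α → A α ≠ A β := by
      intro α hα β hβ heq
      have h1 := (good α hα).ad β hβ
      rw [← heq, Set.inter_self] at h1
      exact (good α hα).inf h1
    intro α hα β hβ hne heq
    rcases hne.lt_or_gt with h | h
    · exact key β hβ α h heq.symm
    · exact key α hα β h heq
  have h𝒜inf : ∀ x ∈ 𝒜, x.Infinite := by
    rintro x ⟨α, hα, rfl⟩
    exact (good α hα).inf
  have h𝒜ad : ∀ x ∈ 𝒜, ∀ y ∈ 𝒜, x ≠ y → (x ∩ y).Finite := by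
    rintro x ⟨α, hα, rfl⟩ y ⟨β, hβ, rfl⟩ hne
    rcases lt_trichotomy α β with h | h | h
    · rw [Set.inter_comm]
      exact (good β hβ).ad α h
    · exact absurd (h ▸ rfl) hne
    · exact (good α hα).ad β h
  have hnatOm : ∀ n : ℕ, (n : Ordinal.{0}) < Om := fun n =>
    (Ordinal.nat_lt_omega0 n).trans omega0_lt_Om
  have h𝒜infinite : 𝒜.Infinite := by
    apply Set.infinite_of_injective_forall_mem (f := fun n : ℕ => A n)
    · intro n m hnm
      by_contra hne
      exact hinj n (hnatOm n) m (hnatOm m) (by exact_mod_cast hne) hnm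
    · intro n
      exact hmemA _ (hnatOm n)
  -- the tail dichotomy
  have hdichB : ∀ V : Set ℕ, (∀ s : Finset (Set ℕ), ↑s ⊆ 𝒜 → (V \ ⋃₀ ↑s).Infinite) →
      ∃ γ, γ < Om ∧ ∀ α, γ ≤ α → α < Om → (A α ∩ V).Infinite := by
    intro V hV
    obtain ⟨ξ, hξOm, hξV⟩ := hWsurj V
    refine ⟨max Ordinal.omega0 (ξ + 1), max_lt omega0_lt_Om (succ_lt_Om hξOm), ?_⟩
    intro α hα hαOm
    have hωα : Ordinal.omega0 ≤ α := le_trans (le_max_left _ _) hα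
    have hξα : ξ < α := by
      have h1 : ξ < ξ + 1 := by
        rw [Ordinal.add_one_eq_succ]
        exact Order.lt_succ ξ
      exact lt_of_lt_of_le h1 (le_trans (le_max_right _ _) hα)
    have hfin : ∀ s : Finset Ordinal.{0}, (∀ β ∈ s, β < α) → (W ξ \ ⋃ β ∈ s, A β).Infinite := by
      intro s hs
      have hsub : ↑(s.image A) ⊆ 𝒜 := by
        intro x hx
        rw [Finset.coe_image] at hx
        obtain ⟨β, hβ, rfl⟩ := hx
        exact hmemA β ((hs β (by exact_mod_cast hβ)).trans hαOm)
      have h2 := hV (s.image A) hsub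
      have hUeq : ⋃₀ (↑(s.image A) : Set (Set ℕ)) = ⋃ β ∈ s, A β := by
        rw [Finset.coe_image, Set.sUnion_image]
        ext x
        simp only [Set.mem_iUnion, Finset.mem_coe, exists_prop]
      rw [hUeq] at h2
      rwa [hξV]
    have := (good α hαOm).hit hωα ξ hξα hfin
    rwa [hξV] at this
  have hdichFin : ∀ (V : Set ℕ) (s : Finset (Set ℕ)), ↑s ⊆ 𝒜 → (V \ ⋃₀ ↑s).Finite →
      {x | x ∈ 𝒜 ∧ (x ∩ V).Infinite} ⊆ ↑s := by
    intro V s hs hfin x hx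
    by_contra hxs
    apply hx.2
    have hsub : x ∩ V ⊆ (x ∩ (V \ ⋃₀ ↑s)) ∪ ⋃ b ∈ s, (x ∩ b) := by
      rintro n ⟨hnx, hnV⟩
      by_cases hn : n ∈ ⋃₀ (↑s : Set (Set ℕ))
      · obtain ⟨b, hb, hnb⟩ := hn
        exact Or.inr (Set.mem_biUnion (by exact_mod_cast hb) ⟨hnx, hnb⟩)
      · exact Or.inl ⟨hnx, hnV, hn⟩
    refine Set.Finite.subset ?_ hsub
    refine (hfin.inter_of_right x).union (Set.Finite.biUnion s.finite_toSet ?_)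
    intro b hb
    refine h𝒜ad x hx.1 b (hs (by exact_mod_cast hb)) ?_
    intro hxb
    exact hxs (by rw [hxb]; exact_mod_cast hb)
  -- madness
  have hmad : ∀ X : Set ℕ, X.Infinite → ∃ a ∈ 𝒜, (a ∩ X).Infinite := by
    intro X hX
    by_contra hcon
    push_neg at hcon
    have hfinint : ∀ a ∈ 𝒜, (a ∩ X).Finite := fun a ha =>
      hcon a ha
    have hstay : ∀ s : Finset (Set ℕ), ↑s ⊆ 𝒜 → (X \ ⋃₀ ↑s).Infinite := by
      intro s hs
      have h1 : (X ∩ ⋃₀ (↑s : Set (Set ℕ))).Finite := by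
        refine Set.Finite.subset (Set.Finite.biUnion s.finite_toSet
          (fun b hb => hfinint b (hs (by exact_mod_cast hb)))) ?_
        rintro n ⟨hnX, b, hb, hnb⟩
        exact Set.mem_biUnion (by exact_mod_cast hb) ⟨hnb, hnX⟩
      refine Set.Infinite.mono ?_ (hX.diff h1)
      intro n hn
      exact ⟨hn.1, fun hc => hn.2 ⟨hn.1, hc⟩⟩
    obtain ⟨γ, hγOm, hγ⟩ := hdichB X hstay
    exact (hγ γ le_rfl hγOm) (hcon (A γ) (hmemA γ hγOm))
  -- the trichotomy for π-closed trace families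
  have htricho : ∀ (T : Finset (Set (Psi 𝒜))),
      ({x | x ∈ 𝒜 ∧ ∀ D ∈ T, (x ∩ trc D).Infinite}).Finite ∨
      (∃ γ, γ < Om ∧ ∀ α, γ ≤ α → α < Om → A α ∈ {x | x ∈ 𝒜 ∧ ∀ D ∈ T, (x ∩ trc D).Infinite}) := by
    intro T
    by_cases hfin : ∃ D ∈ T, ∃ s : Finset (Set ℕ), ↑s ⊆ 𝒜 ∧ (trc D \ ⋃₀ ↑s).Finite
    · left
      obtain ⟨D, hD, s, hs, hsfin⟩ := hfin
      refine Set.Finite.subset s.finite_toSet ?_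
      intro x hx
      exact hdichFin (trc D) s hs hsfin ⟨hx.1, hx.2 D hD⟩
    · right
      push_neg at hfin
      have htails : ∀ D ∈ T, ∃ γ, γ < Om ∧ ∀ α, γ ≤ α → α < Om → (A α ∩ trc D).Infinite := by
        intro D hD
        apply hdichB
        intro s hs
        rcases Set.finite_or_infinite (trc D \ ⋃₀ ↑s) with h | h
        · exact absurd h (hfin D hD s hs)
        · exact h
      obtain ⟨γ, hγOm, hγ⟩ := tail_combine A T trc htails
      exact ⟨γ, hγOm, fun α hα hαOm => ⟨hmemA α hαOm, hγ α hα hαOm⟩⟩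
  refine ⟨𝒜, ⟨⟨h𝒜infinite, h𝒜inf, h𝒜ad⟩, hmad⟩, ?_, ?_⟩
  · -- Luzin family
    refine ⟨A, ?_, ?_, ?_, ?_⟩
    · intro α hα
      exact hmemA α hα
    · rintro x ⟨α, hα, rfl⟩
      exact ⟨α, hα, rfl⟩
    · intro α hα β hβ hne
      exact hinj α hα β hβ hne
    · intro α hα n
      exact (good α hα).luzin n
  · -- quasi-normality
    intro P Q hP hQ hPQ
    obtain ⟨S, hSreg, rfl⟩ := hP
    obtain ⟨T, hTreg, rfl⟩ := hQ
    rcases htricho T with hTfin | ⟨γB, hγB, hTtail⟩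
    · exact sep_of_finite h𝒜inf h𝒜ad S T hSreg hTreg hPQ hTfin
    · rcases htricho S with hSfin | ⟨γA, hγA, hStail⟩
      · exact sepOpen_symm (sep_of_finite h𝒜inf h𝒜ad T S hTreg hSreg hPQ.symm hSfin)
      · exfalso
        set α := max γA γB with hαdef
        have hαOm : α < Om := max_lt hγA hγB
        have hA := hStail α (le_max_left _ _) hαOm
        have hB := hTtail α (le_max_right _ _) hαOm
        have hptA : Psi.pt ⟨A α, hA.1⟩ ∈ ⋂₀ (↑S : Set (Set (Psi 𝒜))) := by
          rw [Set.mem_sInter]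
          intro C hC
          rw [Finset.mem_coe] at hC
          exact (regClosed_pt_iff h𝒜inf (hSreg C hC) _).mpr (hA.2 C hC)
        have hptB : Psi.pt ⟨A α, hA.1⟩ ∈ ⋂₀ (↑T : Set (Set (Psi 𝒜))) := by
          rw [Set.mem_sInter]
          intro D hD
          rw [Finset.mem_coe] at hD
          exact (regClosed_pt_iff h𝒜inf (hTreg D hD) _).mpr (hB.2 D hD)
        exact Set.disjoint_left.mp hPQ hptA hptB

end PsiSpace
end

section
/- Assuming the Continuum Hypothesis, there exists a Luzin mad family 𝒜 such that for every infinite X ⊆ ℕ, either X is covered by finitely many elements of 𝒜 (i.e., X ⊆ ⋃F for some finite F ⊆ 𝒜) or the set {a ∈ 𝒜 : a ∩ X is finite} is countable. -/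
open Set

namespace PsiSpace

/-- pick an element of an infinite set of naturals above t -/
noncomputable def pick (S : Set ℕ) (hS : S.Infinite) (t : ℕ) : ℕ := (hS.exists_gt t).choose

lemma pick_mem (S : Set ℕ) (hS : S.Infinite) (t : ℕ) : pick S hS t ∈ S :=
  (hS.exists_gt t).choose_spec.1

lemma pick_gt (S : Set ℕ) (hS : S.Infinite) (t : ℕ) : t < pick S hS t :=
  (hS.exists_gt t).choose_spec.2

lemma step_exists (b : ℕ → Set ℕ) (hb : ∀ k, (b k).Infinite)
    (hbd : ∀ k j, k ≠ j → (b k ∩ b j).Finite)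
    (Y : ℕ → Set ℕ) (hY : ∀ i m, (Y i \ ⋃ j ∈ Finset.range m, b j).Infinite) :
    ∃ c : Set ℕ, c.Infinite ∧ (∀ k, (c ∩ b k).Finite) ∧
      (∀ k, ∃ x ∈ c ∩ b k, k ≤ x) ∧ (∀ i, (c ∩ Y i).Infinite) := by
  classical
  set T : ℕ → Set ℕ := fun m =>
    if m % 2 = 0 then b (m / 2) \ ⋃ j ∈ Finset.range (m / 2), b j
    else Y ((m / 2).unpair.1) \ ⋃ j ∈ Finset.range (m + 1), b j with hT
  have hTinf : ∀ m, (T m).Infinite := by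
    intro m
    by_cases h : m % 2 = 0
    · simp only [hT, if_pos h]
      set k := m / 2
      have hfin : (⋃ j ∈ Finset.range k, b k ∩ b j).Finite := by
        apply Set.Finite.biUnion (Finset.finite_toSet _)
        intro j hj
        exact hbd k j (by simp at hj; omega)
      refine ((hb k).diff hfin).mono ?_
      rintro x ⟨hx, hx2⟩
      refine ⟨hx, ?_⟩
      simp only [mem_iUnion] at hx2 ⊢
      push_neg at hx2 ⊢
      intro j hj hxb
      exact hx2 j hj ⟨hx, hxb⟩
    · simp only [hT, if_neg h]
      exact hY _ _
  -- the recursive sequence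
  set g : ℕ → ℕ := fun m => Nat.rec (pick (T 0) (hTinf 0) 0)
    (fun m gm => pick (T (m+1)) (hTinf (m+1)) (max gm (m+1))) m with hg
  have hgT : ∀ m, g m ∈ T m := by
    intro m
    cases m with
    | zero => exact pick_mem _ _ _
    | succ m => exact pick_mem _ _ _
  have hgs : StrictMono g := by
    apply strictMono_nat_of_lt_succ
    intro m
    exact lt_of_le_of_lt (le_max_left _ _) (pick_gt _ _ _)
  have hge : ∀ m, m ≤ g m := by
    intro m
    cases m with
    | zero => exact Nat.zero_le _
    | succ m => exact le_of_lt (lt_of_le_of_lt (le_max_right _ _) (pick_gt _ _ _))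
  refine ⟨Set.range g, Set.infinite_range_of_injective hgs.injective, ?_, ?_, ?_⟩
  · -- c ∩ b j finite
    intro j
    have : Set.range g ∩ b j ⊆ g '' (Set.Iio (2*j + 2)) := by
      rintro x ⟨⟨m, rfl⟩, hxb⟩
      refine ⟨m, ?_, rfl⟩
      have hm := hgT m
      by_cases h : m % 2 = 0
      · simp only [hT, if_pos h] at hm
        have hk : ¬ (m / 2 > j) := by
          intro hgt
          exact hm.2 (by
            simp only [mem_iUnion]
            exact ⟨j, by simp [Finset.mem_range]; omega, hxb⟩)
        simp only [mem_Iio]; omega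
      · simp only [hT, if_neg h] at hm
        have hk : ¬ (m + 1 > j) := by
          intro hgt
          exact hm.2 (by
            simp only [mem_iUnion]
            exact ⟨j, by simp [Finset.mem_range]; omega, hxb⟩)
        simp only [mem_Iio]; omega
    exact (Set.Finite.image _ (Set.finite_Iio _)).subset this
  · -- hitting
    intro k
    have hm := hgT (2*k)
    have h2 : (2*k) % 2 = 0 := by omega
    simp only [hT, if_pos h2] at hm
    have hk2 : 2*k/2 = k := by omega
    rw [hk2] at hm
    exact ⟨g (2*k), ⟨⟨2*k, rfl⟩, hm.1⟩, le_trans (by omega) (hge (2*k))⟩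
  · -- c ∩ Y i infinite
    intro i
    apply Set.infinite_of_injective_forall_mem
      (f := fun s : ℕ => g (2 * (Nat.pair i s) + 1)) ?_ ?_
    · intro s t hst
      simp only [] at hst
      have h3 : (2 * Nat.pair i s + 1) = (2 * Nat.pair i t + 1) := hgs.injective hst
      have := (Nat.pair_eq_pair.mp (by omega : Nat.pair i s = Nat.pair i t)).2
      exact this
    · intro s
      refine ⟨⟨2 * (Nat.pair i s) + 1, rfl⟩, ?_⟩
      have hm := hgT (2 * (Nat.pair i s) + 1)
      have h2 : ¬ ((2 * (Nat.pair i s) + 1) % 2 = 0) := by omega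
      simp only [hT, if_neg h2] at hm
      have hk2 : (2 * (Nat.pair i s) + 1) / 2 = Nat.pair i s := by omega
      rw [hk2, Nat.unpair_pair] at hm
      exact hm.1

def goodIn (F : Set (Set ℕ)) (S : Set ℕ) : Prop :=
  ∀ G : Finset (Set ℕ), ↑G ⊆ F → (S \ ⋃₀ ↑G).Infinite

lemma stage_exists (F : Set (Set ℕ)) (hFc : F.Countable) (hFi : F.Infinite)
    (hmem : ∀ f ∈ F, (f : Set ℕ).Infinite)
    (hAD : ∀ f ∈ F, ∀ g ∈ F, f ≠ g → (f ∩ g).Finite)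
    (𝒳 : Set (Set ℕ)) (h𝒳c : 𝒳.Countable) (h𝒳n : 𝒳.Nonempty)
    (hgood : ∀ S ∈ 𝒳, goodIn F S) :
    ∃ c : Set ℕ, c.Infinite ∧ (∀ f ∈ F, (c ∩ f).Finite) ∧
      (∃ b : ℕ → Set ℕ, Set.range b = F ∧ Function.Injective b ∧
        ∀ k, ∃ x ∈ c ∩ b k, k ≤ x) ∧
      (∀ S ∈ 𝒳, (c ∩ S).Infinite) := by
  classical
  haveI := hFc.to_subtype
  haveI := hFi.to_subtype
  obtain ⟨d⟩ := nonempty_denumerable ↥F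
  set b : ℕ → Set ℕ := fun k => ((Denumerable.eqv ↥F).symm k : Set ℕ) with hbdef
  have hbF : ∀ k, b k ∈ F := fun k => ((Denumerable.eqv ↥F).symm k).2
  have hbinj : Function.Injective b :=
    Subtype.val_injective.comp (Denumerable.eqv ↥F).symm.injective
  have hbrange : Set.range b = F := by
    ext f
    constructor
    · rintro ⟨k, rfl⟩; exact hbF k
    · intro hf
      exact ⟨(Denumerable.eqv ↥F) ⟨f, hf⟩, by simp [hbdef]⟩
  obtain ⟨Yf, hYf⟩ := h𝒳c.exists_eq_range h𝒳n
  have hYmem : ∀ i, Yf i ∈ 𝒳 := fun i => hYf ▸ ⟨i, rfl⟩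
  have hY : ∀ i m, (Yf i \ ⋃ j ∈ Finset.range m, b j).Infinite := by
    intro i m
    have hG : ↑((Finset.range m).image b) ⊆ F := by
      intro f hf
      simp only [Finset.coe_image, Set.mem_image] at hf
      obtain ⟨j, _, rfl⟩ := hf
      exact hbF j
    have := hgood _ (hYmem i) _ hG
    have heq : ⋃₀ ↑((Finset.range m).image b) = ⋃ j ∈ Finset.range m, b j := by
      rw [Finset.coe_image, Set.sUnion_image]
      simp
    rwa [heq] at this
  obtain ⟨c, hc1, hc2, hc3, hc4⟩ := step_exists b (fun k => hmem _ (hbF k))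
    (fun k j hkj => hAD _ (hbF k) _ (hbF j) (fun h => hkj (hbinj h))) Yf hY
  refine ⟨c, hc1, ?_, ⟨b, hbrange, hbinj, hc3⟩, ?_⟩
  · intro f hf
    rw [← hbrange] at hf
    obtain ⟨k, rfl⟩ := hf
    exact hc2 k
  · intro S hS
    rw [hYf] at hS
    obtain ⟨i, rfl⟩ := hS
    exact hc4 i

def pPiece (n : ℕ) : Set ℕ := {m | (Nat.unpair m).1 = n}

lemma pPiece_infinite (n : ℕ) : (pPiece n).Infinite := by
  apply Set.infinite_of_injective_forall_mem (f := fun k => Nat.pair n k)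
  · intro s t hst; exact (Nat.pair_eq_pair.mp hst).2
  · intro k; simp [pPiece, Nat.unpair_pair]

lemma pPiece_disjoint {n m : ℕ} (h : n ≠ m) : pPiece n ∩ pPiece m = ∅ := by
  ext x; simp only [pPiece, mem_inter_iff, mem_setOf_eq, mem_empty_iff_false, iff_false]
  rintro ⟨rfl, h2⟩; exact h h2

lemma pPiece_injective : Function.Injective pPiece := by
  intro n m h
  by_contra hne
  have := pPiece_disjoint hne
  rw [h, Set.inter_self] at this
  exact (pPiece_infinite m).nonempty.ne_empty this

lemma pPiece_cover (m : ℕ) : m ∈ pPiece (Nat.unpair m).1 := rfl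

variable (X : Ordinal.{0} → Set ℕ)

def Fam (α : Ordinal.{0}) (ih : ∀ β, β < α → Set ℕ) : Set (Set ℕ) :=
  {S | ∃ β, ∃ h : β < α, ih β h = S}

def StepOK (α : Ordinal.{0}) (ih : ∀ β, β < α → Set ℕ) (c : Set ℕ) : Prop :=
  c.Infinite ∧ (∀ S ∈ Fam α ih, (c ∩ S).Finite) ∧
    (∃ b : ℕ → Set ℕ, Set.range b = Fam α ih ∧ Function.Injective b ∧
      ∀ k, ∃ x ∈ c ∩ b k, k ≤ x) ∧
    (∀ γ, γ ≤ α → goodIn (Fam α ih) (X γ) → (c ∩ X γ).Infinite)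

open Classical in
noncomputable def stepF (α : Ordinal.{0}) (ih : ∀ β, β < α → Set ℕ) : Set ℕ :=
  if h : α < Ordinal.omega0 then pPiece (Ordinal.lt_omega0.mp h).choose
  else if h2 : ∃ c, StepOK X α ih c then h2.choose else ∅

noncomputable def A : Ordinal.{0} → Set ℕ := Ordinal.lt_wf.fix (stepF X)

lemma A_eq (α : Ordinal.{0}) : A X α = stepF X α (fun β _ => A X β) :=
  WellFounded.fix_eq _ _ _

lemma Fam_eq (α : Ordinal.{0}) : Fam α (fun β (_ : β < α) => A X β) = A X '' Set.Iio α := by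
  ext S
  simp only [Fam, mem_setOf_eq, mem_image, mem_Iio]
  constructor
  · rintro ⟨β, h, rfl⟩; exact ⟨β, h, rfl⟩
  · rintro ⟨β, h, rfl⟩; exact ⟨β, h, rfl⟩

lemma A_nat (n : ℕ) : A X n = pPiece n := by
  rw [A_eq]
  unfold stepF
  rw [dif_pos (Ordinal.nat_lt_omega0 n)]
  have h : (n : Ordinal.{0}) = ((Ordinal.lt_omega0.mp (Ordinal.nat_lt_omega0 n)).choose : ℕ) :=
    (Ordinal.lt_omega0.mp (Ordinal.nat_lt_omega0 n)).choose_spec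
  have h2 : (Ordinal.lt_omega0.mp (Ordinal.nat_lt_omega0 n)).choose = n := by exact_mod_cast h.symm
  rw [h2]

lemma A_lt_omega {α : Ordinal.{0}} (h : α < Ordinal.omega0) :
    ∃ n : ℕ, α = n ∧ A X α = pPiece n := by
  obtain ⟨n, rfl⟩ := Ordinal.lt_omega0.mp h
  exact ⟨n, rfl, A_nat X n⟩



lemma countable_Iio_ord {α : Ordinal.{0}} (hα : α < (Cardinal.aleph 1).ord) : (Set.Iio α).Countable := by
  rw [← Set.countable_coe_iff, ← Cardinal.mk_le_aleph0_iff, Ordinal.mk_Iio_ordinal]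
  have h1 : α.card ≤ Cardinal.aleph 0 := by
    have h := Cardinal.lt_ord.mp hα
    have heq : Cardinal.aleph 1 = Order.succ (Cardinal.aleph 0) := by
      rw [← Cardinal.aleph_succ]; norm_num
    rwa [heq, Order.lt_succ_iff] at h
  rw [Cardinal.aleph_zero] at h1
  calc Cardinal.lift.{1} α.card ≤ Cardinal.lift.{1} Cardinal.aleph0 := Cardinal.lift_le.mpr h1
    _ = Cardinal.aleph0 := Cardinal.lift_aleph0

lemma countable_Iic_ord {α : Ordinal.{0}} (hα : α < (Cardinal.aleph 1).ord) : (Set.Iic α).Countable := by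
  rw [← Set.Iio_union_right]
  exact (countable_Iio_ord hα).union (Set.countable_singleton α)

variable (X : Ordinal.{0} → Set ℕ)

def ADInv (α : Ordinal.{0}) : Prop :=
  (A X α).Infinite ∧ ∀ β < α, (A X α ∩ A X β).Finite

lemma exists_stepOK (α : Ordinal.{0}) (hω : Ordinal.omega0 ≤ α)
    (hα : α < (Cardinal.aleph 1).ord) (IH : ∀ β, β < α → ADInv X β) :
    ∃ c, StepOK X α (fun β _ => A X β) c := by
  classical
  set F := A X '' Set.Iio α with hF
  have hsub : ∀ n : ℕ, pPiece n ∈ F := fun n =>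
    ⟨n, lt_of_lt_of_le (Ordinal.nat_lt_omega0 n) hω, A_nat X n⟩
  have hmem : ∀ f ∈ F, f.Infinite := by rintro f ⟨β, hβ, rfl⟩; exact (IH β hβ).1
  have hAD : ∀ f ∈ F, ∀ g ∈ F, f ≠ g → (f ∩ g).Finite := by
    rintro f ⟨β, hβ, rfl⟩ g ⟨γ, hγ, rfl⟩ hne
    have hbg : β ≠ γ := by rintro rfl; exact hne rfl
    rcases hbg.lt_or_gt with h | h
    · rw [Set.inter_comm]; exact (IH γ hγ).2 β h
    · exact (IH β hβ).2 γ h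
  have hFc : F.Countable := (countable_Iio_ord hα).image _
  have hFi : F.Infinite :=
    Set.infinite_of_injective_forall_mem pPiece_injective hsub
  have hgoodU : goodIn F Set.univ := by
    intro G hG
    by_contra hfin
    rw [Set.not_infinite] at hfin
    have hmemG : ∀ n : ℕ, pPiece n ∈ G := by
      intro n
      have hinf : (pPiece n ∩ ⋃₀ ↑G).Infinite := by
        by_contra h2
        rw [Set.not_infinite] at h2
        have hsp : pPiece n ⊆ (Set.univ \ ⋃₀ ↑G) ∪ (pPiece n ∩ ⋃₀ ↑G) := by
          intro x hx
          by_cases h : x ∈ ⋃₀ ↑G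
          · exact Or.inr ⟨hx, h⟩
          · exact Or.inl ⟨trivial, h⟩
        exact (pPiece_infinite n) ((hfin.union h2).subset hsp)
      have hex : ∃ g ∈ G, (pPiece n ∩ g).Infinite := by
        by_contra h3
        push_neg at h3
        have heq : (pPiece n ∩ ⋃₀ ↑G) = ⋃ g ∈ (G : Set (Set ℕ)), pPiece n ∩ g := by
          rw [Set.sUnion_eq_biUnion, Set.inter_iUnion₂]
        rw [heq] at hinf
        exact hinf (Set.Finite.biUnion G.finite_toSet (fun g hg => h3 g hg))
      obtain ⟨g, hgG, hginf⟩ := hex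
      have hgP : g = pPiece n := by
        by_contra hne
        exact hginf (by rw [Set.inter_comm]; exact hAD g (hG hgG) _ (hsub n) hne)
      rwa [← hgP]
    exact (Set.infinite_of_injective_forall_mem pPiece_injective hmemG) G.finite_toSet
  set 𝒳 : Set (Set ℕ) := insert Set.univ {S | (∃ γ ≤ α, X γ = S) ∧ goodIn F S} with h𝒳
  have h𝒳c : 𝒳.Countable := by
    apply Set.Countable.insert
    have hsub2 : {S | (∃ γ ≤ α, X γ = S) ∧ goodIn F S} ⊆ X '' Set.Iic α := by
      rintro S ⟨⟨γ, hγ, rfl⟩, -⟩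
      exact ⟨γ, hγ, rfl⟩
    exact ((countable_Iic_ord hα).image X).mono hsub2
  have h𝒳n : 𝒳.Nonempty := ⟨Set.univ, Set.mem_insert _ _⟩
  have hgood : ∀ S ∈ 𝒳, goodIn F S := by
    rintro S (rfl | ⟨-, h⟩)
    · exact hgoodU
    · exact h
  obtain ⟨c, hc1, hc2, hc3, hc4⟩ := stage_exists F hFc hFi hmem hAD 𝒳 h𝒳c h𝒳n hgood
  refine ⟨c, hc1, ?_, ?_, ?_⟩
  · rw [Fam_eq]; exact hc2
  · rw [Fam_eq]; exact hc3
  · intro γ hγ hg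
    rw [Fam_eq] at hg
    exact hc4 _ (Set.mem_insert_iff.mpr (Or.inr ⟨⟨γ, hγ, rfl⟩, hg⟩))

lemma stepOK_holds (α : Ordinal.{0}) (hω : Ordinal.omega0 ≤ α)
    (hα : α < (Cardinal.aleph 1).ord) (IH : ∀ β, β < α → ADInv X β) :
    StepOK X α (fun β _ => A X β) (A X α) := by
  have hex := exists_stepOK X α hω hα IH
  rw [A_eq]
  unfold stepF
  rw [dif_neg (not_lt.mpr hω), dif_pos hex]
  exact hex.choose_spec

lemma inv_all : ∀ α, α < (Cardinal.aleph 1).ord → ADInv X α := by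
  intro α
  induction α using Ordinal.induction with
  | _ α IH =>
    intro hα
    by_cases hω : α < Ordinal.omega0
    · obtain ⟨n, rfl, hAn⟩ := A_lt_omega X hω
      constructor
      · rw [hAn]; exact pPiece_infinite n
      · intro β hβ
        obtain ⟨m, rfl, hAm⟩ := A_lt_omega X (hβ.trans hω)
        have hmn : n ≠ m := by
          have : m < n := by exact_mod_cast hβ
          omega
        rw [hAn, hAm, pPiece_disjoint hmn]
        exact Set.finite_empty
    · have hOK := stepOK_holds X α (not_lt.mp hω) hα (fun β hβ => IH β hβ (hβ.trans hα))
      refine ⟨hOK.1, fun β hβ => hOK.2.1 _ ?_⟩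
      rw [Fam_eq]
      exact ⟨β, hβ, rfl⟩

lemma stepOK_all (α : Ordinal.{0}) (hω : Ordinal.omega0 ≤ α)
    (hα : α < (Cardinal.aleph 1).ord) :
    StepOK X α (fun β _ => A X β) (A X α) :=
  stepOK_holds X α hω hα (fun β hβ => inv_all X β (hβ.trans hα))

lemma A_ne (α β : Ordinal.{0}) (hα : α < (Cardinal.aleph 1).ord) (hβ : β < α) :
    A X α ≠ A X β := by
  intro he
  have h := (inv_all X α hα).2 β hβ
  rw [he, Set.inter_self] at h
  have h1 := (inv_all X α hα).1
  rw [he] at h1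
  exact h1 h



/-- under CH there is a Luzin mad family 𝒜 such that every infinite X ⊆ ℕ is
either covered by finitely many elements of 𝒜, or {a ∈ 𝒜 : a ∩ X finite} is countable. -/
theorem CH_luzin_mad_dichotomy (hCH : Cardinal.continuum = Cardinal.aleph 1) :
    ∃ 𝒜, MadFamily 𝒜 ∧ LuzinFamily 𝒜 ∧
      ∀ X : Set ℕ, X.Infinite →
        (∃ F : Finset (Set ℕ), ↑F ⊆ 𝒜 ∧ X ⊆ ⋃₀ ↑F) ∨
          {a : Set ℕ | a ∈ 𝒜 ∧ (a ∩ X).Finite}.Countable := by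
  classical
  -- basic ordinal facts
  have hω1 : Ordinal.omega0 < (Cardinal.aleph 1).ord := by
    rw [Cardinal.lt_ord, Ordinal.card_omega0]
    exact Cardinal.aleph0_lt_aleph_one
  have hnatlt : ∀ n : ℕ, (n : Ordinal.{0}) < (Cardinal.aleph 1).ord :=
    fun n => (Ordinal.nat_lt_omega0 n).trans hω1
  -- the enumeration of all subsets of ℕ
  have hCH0 : Cardinal.continuum.{0} = Cardinal.aleph.{0} 1 := by
    apply Cardinal.lift_injective
    rw [Cardinal.lift_continuum, hCH]
    simp only [← Ordinal.succ_zero, Cardinal.aleph_succ, Cardinal.aleph_zero,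
      Cardinal.lift_succ, Cardinal.lift_aleph0]
  have hmkset : Cardinal.mk (Set ℕ) = Cardinal.aleph 1 := by
    rw [Cardinal.mk_set, Cardinal.mk_nat, Cardinal.two_power_aleph0, hCH0]
  have hIio : Cardinal.mk ↥(Set.Iio ((Cardinal.aleph 1).ord : Ordinal.{0})) =
      Cardinal.lift.{1, 0} (Cardinal.aleph.{0} 1) := by
    rw [Ordinal.mk_Iio_ordinal, Cardinal.card_ord]
  have hequiv : Nonempty (↥(Set.Iio ((Cardinal.aleph 1).ord : Ordinal.{0})) ≃ Set ℕ) := by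
    rw [← Cardinal.lift_mk_eq'.{1, 0}]
    rw [hIio, hmkset, Cardinal.lift_uzero]
  obtain ⟨e⟩ := hequiv
  set Xe : Ordinal.{0} → Set ℕ :=
    fun γ => if h : γ < (Cardinal.aleph 1).ord then e ⟨γ, h⟩ else ∅ with hXe
  have hXsurj : ∀ S : Set ℕ, ∃ γ, γ < (Cardinal.aleph 1).ord ∧ Xe γ = S := by
    intro S
    obtain ⟨⟨γ, hγ⟩, hS⟩ := e.surjective S
    exact ⟨γ, hγ, by show (if h : γ < (Cardinal.aleph 1).ord then e ⟨γ, h⟩ else ∅) = S; rw [dif_pos (Set.mem_Iio.mp hγ)]; exact hS⟩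
  set 𝒜 : Set (Set ℕ) := A Xe '' Set.Iio (Cardinal.aleph 1).ord with h𝒜
  have hpmem : ∀ n : ℕ, pPiece n ∈ 𝒜 := fun n => ⟨n, hnatlt n, A_nat Xe n⟩
  have hmem𝒜 : ∀ a ∈ 𝒜, a.Infinite := by
    rintro a ⟨α, hα, rfl⟩; exact (inv_all Xe α hα).1
  have hAD𝒜 : ∀ a ∈ 𝒜, ∀ b ∈ 𝒜, a ≠ b → (a ∩ b).Finite := by
    rintro a ⟨α, hα, rfl⟩ b ⟨β, hβ, rfl⟩ hne
    have hab : α ≠ β := by rintro rfl; exact hne rfl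
    rcases hab.lt_or_gt with h | h
    · rw [Set.inter_comm]; exact (inv_all Xe β hβ).2 α h
    · exact (inv_all Xe α hα).2 β h
  -- good case helper: if goodIn 𝒜 S and γ is an index of S then for all suitable α,
  -- (A Xe α ∩ S).Infinite
  have hgoodhit : ∀ S : Set ℕ, goodIn 𝒜 S → ∀ γ, Xe γ = S →
      ∀ α, γ ≤ α → Ordinal.omega0 ≤ α → α < (Cardinal.aleph 1).ord →
      (A Xe α ∩ S).Infinite := by
    intro S hg γ hγS α hγα hωα hα
    have hOK := stepOK_all Xe α hωα hα
    have h4 := hOK.2.2.2 γ hγα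
    rw [Fam_eq] at h4
    have hsub : A Xe '' Set.Iio α ⊆ 𝒜 :=
      Set.image_mono (fun β hβ => lt_trans hβ hα)
    have hgood2 : goodIn (A Xe '' Set.Iio α) (Xe γ) := by
      rw [hγS]; exact fun G hG => hg G (hG.trans hsub)
    have := h4 hgood2
    rwa [hγS] at this
  -- not-good case: covered by finitely many
  have hnotgood : ∀ S : Set ℕ, S.Infinite → ¬ goodIn 𝒜 S →
      ∃ F : Finset (Set ℕ), ↑F ⊆ 𝒜 ∧ S ⊆ ⋃₀ ↑F := by
    intro S _ hng
    rw [goodIn] at hng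
    push_neg at hng
    obtain ⟨G, hG𝒜, hGfin⟩ := hng
    refine ⟨G ∪ hGfin.toFinset.image (fun m => pPiece (Nat.unpair m).1), ?_, ?_⟩
    · intro f hf
      simp only [Finset.coe_union, Set.mem_union, Finset.coe_image, Set.mem_image] at hf
      rcases hf with hf | ⟨m, _, rfl⟩
      · exact hG𝒜 hf
      · exact hpmem _
    · intro x hx
      by_cases h : x ∈ ⋃₀ ↑G
      · obtain ⟨t, ht, hxt⟩ := h
        exact ⟨t, by simp [Finset.mem_union, ht], hxt⟩
      · refine ⟨pPiece (Nat.unpair x).1, ?_, pPiece_cover x⟩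
        simp only [Finset.coe_union, Set.mem_union, Finset.coe_image, Set.mem_image]
        refine Or.inr ⟨x, ?_, rfl⟩
        simp only [Set.Finite.coe_toFinset]
        exact ⟨hx, h⟩
  refine ⟨𝒜, ⟨⟨?_, hmem𝒜, hAD𝒜⟩, ?_⟩, ?_, ?_⟩
  · -- infinite
    exact Set.infinite_of_injective_forall_mem pPiece_injective hpmem
  · -- maximality
    intro S hS
    obtain ⟨γ, hγ, hγS⟩ := hXsurj S
    by_cases hg : goodIn 𝒜 S
    · refine ⟨A Xe (max γ Ordinal.omega0), ⟨_, max_lt hγ hω1, rfl⟩, ?_⟩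
      exact hgoodhit S hg γ hγS _ (le_max_left _ _) (le_max_right _ _) (max_lt hγ hω1)
    · obtain ⟨F, hF𝒜, hFS⟩ := hnotgood S hS hg
      have hinf : (S ∩ ⋃₀ ↑F).Infinite := by
        rwa [Set.inter_eq_self_of_subset_left hFS]
      have hex : ∃ g ∈ F, (S ∩ g).Infinite := by
        by_contra h3
        push_neg at h3
        have heq : (S ∩ ⋃₀ ↑F) = ⋃ g ∈ (F : Set (Set ℕ)), S ∩ g := by
          rw [Set.sUnion_eq_biUnion, Set.inter_iUnion₂]
        rw [heq] at hinf
        exact hinf (Set.Finite.biUnion F.finite_toSet (fun g hg => h3 g hg))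
      obtain ⟨g, hgF, hginf⟩ := hex
      exact ⟨g, hF𝒜 hgF, by rwa [Set.inter_comm]⟩
  · -- Luzin
    refine ⟨A Xe, fun α hα => ⟨α, hα, rfl⟩, ?_, ?_, ?_⟩
    · rintro x ⟨α, hα, rfl⟩; exact ⟨α, hα, rfl⟩
    · intro α hα β hβ hne
      rcases hne.lt_or_gt with h | h
      · exact (A_ne Xe β α hβ h).symm
      · exact A_ne Xe α β hα h
    · intro α hα n
      by_cases hω : α < Ordinal.omega0
      · obtain ⟨m, rfl, _⟩ := A_lt_omega Xe hω
        apply Set.Finite.subset (Set.Finite.image (fun k : ℕ => (k : Ordinal.{0}))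
          (Set.finite_Iio m))
        rintro β ⟨hβ, -⟩
        obtain ⟨k, rfl⟩ := Ordinal.lt_omega0.mp (hβ.trans (Ordinal.nat_lt_omega0 m))
        exact ⟨k, by exact_mod_cast hβ, rfl⟩
      · have hOK := stepOK_all Xe α (not_lt.mp hω) hα
        obtain ⟨b, hbr, hbinj, hbhit⟩ := hOK.2.2.1
        rw [Fam_eq] at hbr
        set f : Ordinal.{0} → ℕ :=
          fun β => if h : ∃ k, b k = A Xe β then h.choose else 0 with hf
        apply Set.Finite.of_finite_image (f := f)
        · apply Set.Finite.subset (Set.finite_Iio n)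
          rintro k ⟨β, ⟨hβ, hsubn⟩, rfl⟩
          have hmem : A Xe β ∈ Set.range b := by rw [hbr]; exact ⟨β, hβ, rfl⟩
          have hk : ∃ k, b k = A Xe β := hmem
          have hbk : b (f β) = A Xe β := by rw [hf]; simp only [dif_pos hk]; exact hk.choose_spec
          obtain ⟨x, hx, hkx⟩ := hbhit (f β)
          rw [hbk] at hx
          have := hsubn hx
          simp only [Set.mem_Iio] at this ⊢
          omega
        · rintro β ⟨hβ, -⟩ β' ⟨hβ', -⟩ hff
          by_contra hne
          have hAne : A Xe β ≠ A Xe β' := by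
            rcases (Ne.lt_or_gt hne) with h | h
            · exact (A_ne Xe β' β (hβ'.trans hα) h).symm
            · exact A_ne Xe β β' (hβ.trans hα) h
          have hk : ∃ k, b k = A Xe β := by rw [← Set.mem_range, hbr]; exact ⟨β, hβ, rfl⟩
          have hk' : ∃ k, b k = A Xe β' := by rw [← Set.mem_range, hbr]; exact ⟨β', hβ', rfl⟩
          have hbk : b (f β) = A Xe β := by rw [hf]; simp only [dif_pos hk]; exact hk.choose_spec
          have hbk' : b (f β') = A Xe β' := by
            rw [hf]; simp only [dif_pos hk']; exact hk'.choose_spec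
          rw [hff, hbk'] at hbk
          exact hAne hbk.symm
  · -- dichotomy
    intro S hS
    by_cases hg : goodIn 𝒜 S
    · right
      obtain ⟨γ, hγ, hγS⟩ := hXsurj S
      have hmax : max γ Ordinal.omega0 < (Cardinal.aleph 1).ord := max_lt hγ hω1
      apply Set.Countable.mono ?_ ((countable_Iio_ord hmax).image (A Xe))
      rintro a ⟨⟨α, hα, rfl⟩, hfin⟩
      refine ⟨α, ?_, rfl⟩
      simp only [Set.mem_Iio]
      by_contra hge
      push_neg at hge
      exact (hgoodhit S hg γ hγS α ((le_max_left _ _).trans hge)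
        ((le_max_right _ _).trans hge) hα) hfin
    · left
      exact hnotgood S hS hg


end PsiSpace
end
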